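/- For every integer r and all natural numbers ℓ, s with s < r: Σ_{b=s−r}^{−1} (b+r−s)_ℓ · (b)_s = (−1)^s · ℓ! · s! · binom(r, s+ℓ+1), an identity of integers (the sum is over the integers b with s−r ≤ b ≤ −1). -/
import Mathlib


/-- The falling factorial `(a)_k = a(a−1)⋯(a−k+1)` for `a : ℤ`, with `(a)_0 = 1`. -/
def fallFact (a : ℤ) (k : ℕ) : ℤ := ∏ i ∈ Finset.range k, (a - i)

/-- The generalized binomial coefficient `binom(a,k) = (a)_k / k! ∈ ℤ`
for `a : ℤ` and `k : ℕ` (the division is exact). -/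
def intBinom (a : ℤ) (k : ℕ) : ℤ := fallFact a k / (k.factorial : ℤ)

lemma fallFact_succ (a : ℤ) (k : ℕ) : fallFact a (k + 1) = fallFact a k * (a - k) :=
  Finset.prod_range_succ _ _

lemma fallFact_natCast (m : ℕ) : ∀ k : ℕ, fallFact (m : ℤ) k = (m.descFactorial k : ℤ)
  | 0 => by simp [fallFact]
  | k + 1 => by
    rw [fallFact_succ, fallFact_natCast m k, Nat.descFactorial_succ, Nat.cast_mul]
    rcases le_or_gt k m with hkm | hkm
    · have h1 : ((m - k : ℕ) : ℤ) = (m : ℤ) - k := by omega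
      rw [h1]; ring
    · have h0 : m.descFactorial k = 0 := Nat.descFactorial_eq_zero_iff_lt.2 hkm
      simp [h0]

lemma fallFact_neg (j : ℕ) : ∀ k : ℕ,
    fallFact (-1 - (j : ℤ)) k = (-1) ^ k * ((j + 1).ascFactorial k : ℤ)
  | 0 => by simp [fallFact]
  | k + 1 => by
    rw [fallFact_succ, fallFact_neg j k, Nat.ascFactorial_succ]
    push_cast
    ring

lemma key (ℓ : ℕ) (k : ℕ) : ∀ s : ℕ,
    (∑ j ∈ Finset.range (k + 1), j.choose ℓ * (k - j).choose s) = (k + 1).choose (ℓ + s + 1) := by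
  induction k with
  | zero =>
    intro s
    rw [Finset.sum_range_one]
    cases ℓ with
    | zero =>
      cases s with
      | zero => simp
      | succ t =>
        rw [Nat.choose_zero_succ, Nat.mul_zero]
        exact (Nat.choose_eq_zero_of_lt (by omega)).symm
    | succ u =>
      rw [Nat.choose_zero_succ, Nat.zero_mul]
      exact (Nat.choose_eq_zero_of_lt (by omega)).symm
  | succ k ih =>
    intro s
    cases s with
    | zero =>
      have h0 := ih 0
      simp only [Nat.choose_zero_right, Nat.mul_one, Nat.add_zero] at h0
      rw [Finset.sum_range_succ]
      simp only [Nat.choose_zero_right, Nat.mul_one, Nat.add_zero]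
      rw [h0, Nat.choose_succ_succ (k + 1) ℓ]
      simp only [Nat.succ_eq_add_one]
      omega
    | succ t =>
      rw [Finset.sum_range_succ, Nat.sub_self, Nat.choose_zero_succ, Nat.mul_zero, Nat.add_zero]
      have hterm : ∀ j ∈ Finset.range (k + 1),
          j.choose ℓ * (k + 1 - j).choose (t + 1)
            = j.choose ℓ * (k - j).choose t + j.choose ℓ * (k - j).choose (t + 1) := by
        intro j hj
        rw [Finset.mem_range] at hj
        have hkj : k + 1 - j = (k - j) + 1 := by omega
        rw [hkj, Nat.choose_succ_succ, Nat.mul_add]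
      rw [Finset.sum_congr rfl hterm, Finset.sum_add_distrib, ih t, ih (t + 1),
        show ℓ + (t + 1) + 1 = (ℓ + t + 1) + 1 by omega,
        Nat.choose_succ_succ (k + 1) (ℓ + t + 1)]

/-- for every integer `r` and all naturals `ℓ, s` with `s < r`:
`Σ_{b=s−r}^{−1} (b+r−s)_ℓ (b)_s = (−1)^s ℓ! s! binom(r, s+ℓ+1)`. -/
theorem stmt12 (r : ℤ) (ℓ s : ℕ) (h : (s : ℤ) < r) :
    ∑ b ∈ Finset.Icc ((s : ℤ) - r) (-1 : ℤ), fallFact (b + r - s) ℓ * fallFact b s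
      = (-1) ^ s * (ℓ.factorial : ℤ) * (s.factorial : ℤ) * intBinom r (s + ℓ + 1) := by
  set n := (r - (s : ℤ)).toNat with hndef
  have hns : (n : ℤ) = r - s := Int.toNat_of_nonneg (by omega)
  have hn1 : 1 ≤ n := by omega
  have himg : Finset.Icc ((s : ℤ) - r) (-1 : ℤ)
      = (Finset.range n).image (fun i : ℕ => (i : ℤ) - n) := by
    ext b
    simp only [Finset.mem_Icc, Finset.mem_image, Finset.mem_range]
    constructor
    · intro hb
      exact ⟨(b + n).toNat, by omega, by omega⟩
    · rintro ⟨i, hi, rfl⟩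
      omega
  rw [himg, Finset.sum_image (fun x _ y _ hxy => by omega)]
  have hterm : ∀ i ∈ Finset.range n,
      fallFact ((i : ℤ) - n + r - s) ℓ * fallFact ((i : ℤ) - n) s
        = (-1) ^ s * ((ℓ.factorial : ℤ) * (i.choose ℓ))
            * ((s.factorial : ℤ) * ((n - i + s - 1).choose s)) := by
    intro i hi
    rw [Finset.mem_range] at hi
    have e1 : (i : ℤ) - n + r - s = (i : ℤ) := by omega
    have e2 : (i : ℤ) - n = -1 - ((n - 1 - i : ℕ) : ℤ) := by omega
    rw [e1, e2, fallFact_natCast, fallFact_neg, show n - 1 - i + 1 = n - i by omega,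
      Nat.descFactorial_eq_factorial_mul_choose, Nat.ascFactorial_eq_factorial_mul_choose']
    push_cast
    ring
  rw [Finset.sum_congr rfl hterm]
  have hpull : ∑ i ∈ Finset.range n, (-1 : ℤ) ^ s * ((ℓ.factorial : ℤ) * (i.choose ℓ))
        * ((s.factorial : ℤ) * ((n - i + s - 1).choose s))
      = (-1) ^ s * (ℓ.factorial : ℤ) * (s.factorial : ℤ)
        * ((∑ i ∈ Finset.range n, i.choose ℓ * (n - i + s - 1).choose s : ℕ) : ℤ) := by
    push_cast
    rw [Finset.mul_sum]
    apply Finset.sum_congr rfl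
    intro i _
    ring
  rw [hpull]
  have hsum : ∑ i ∈ Finset.range n, i.choose ℓ * (n - i + s - 1).choose s
      = (n + s).choose (ℓ + s + 1) := by
    have h1 : ∀ i ∈ Finset.range n,
        i.choose ℓ * (n - i + s - 1).choose s = i.choose ℓ * ((n - 1 + s) - i).choose s := by
      intro i hi
      rw [Finset.mem_range] at hi
      congr 2
      omega
    rw [Finset.sum_congr rfl h1, show n + s = (n - 1 + s) + 1 by omega,
      ← key ℓ (n - 1 + s) s]
    apply Finset.sum_subset (Finset.range_subset_range.2 (by omega))
    intro i hi hni
    rw [Finset.mem_range] at hi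
    rw [Finset.mem_range, not_lt] at hni
    rw [Nat.choose_eq_zero_of_lt (by omega : (n - 1 + s) - i < s), Nat.mul_zero]
  rw [hsum]
  have hr : r = ((s + n : ℕ) : ℤ) := by push_cast; omega
  have hbin : intBinom r (s + ℓ + 1) = ((s + n).choose (s + ℓ + 1) : ℤ) := by
    rw [intBinom, hr, fallFact_natCast, Nat.descFactorial_eq_factorial_mul_choose]
    push_cast
    rw [Int.mul_ediv_cancel_left _ (by exact_mod_cast (s + ℓ + 1).factorial_ne_zero)]
  rw [hbin, show (n + s).choose (ℓ + s + 1) = (s + n).choose (s + ℓ + 1) by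
    rw [Nat.add_comm n s, Nat.add_comm ℓ s]]
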